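/- For real σ ≥ 0 and real t with |t| ≥ 1, Re(log Γ(σ + it) − log Γ(it)) ≤ σ·log|t| + D·(σ + σ³)/t², for an absolute constant D. -/

import Mathlib

open Real intervalIntegral MeasureTheory Finset Filter

namespace St14X

noncomputable def φ (t v : ℝ) : ℝ := Real.log (v ^ 2 + t ^ 2) / 2
noncomputable def φ1 (t v : ℝ) : ℝ := v / (v ^ 2 + t ^ 2)
noncomputable def P2 (t v : ℝ) : ℝ := (t ^ 2 - v ^ 2) / (v ^ 2 + t ^ 2) ^ 2
noncomputable def P3 (t v : ℝ) : ℝ := 2 * v * (v ^ 2 - 3 * t ^ 2) / (v ^ 2 + t ^ 2) ^ 3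
noncomputable def hh (t σ u : ℝ) : ℝ := φ t (u + σ) - φ t u
noncomputable def hh1 (t σ u : ℝ) : ℝ := φ1 t (u + σ) - φ1 t u
noncomputable def hh2 (t σ u : ℝ) : ℝ := P2 t (u + σ) - P2 t u

variable {t : ℝ}

lemma pos_den (ht : 1 ≤ t ^ 2) (v : ℝ) : 0 < v ^ 2 + t ^ 2 := by nlinarith [sq_nonneg v]

lemma hasDerivAt_φ (ht : 1 ≤ t ^ 2) (v : ℝ) :
    HasDerivAt (φ t) (φ1 t v) v := by
  show HasDerivAt (φ t) (v / (v ^ 2 + t ^ 2)) v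
  have h1 : HasDerivAt (fun v : ℝ => v ^ 2 + t ^ 2) (2 * v) v := by
    simpa using ((hasDerivAt_pow 2 v).add_const (t ^ 2))
  have h2 := (h1.log (pos_den ht v).ne')
  have h3 := h2.div_const 2
  refine h3.congr_deriv ?_
  field_simp

lemma hasDerivAt_φ' (ht : 1 ≤ t ^ 2) (v : ℝ) :
    HasDerivAt (φ1 t) (P2 t v) v := by
  show HasDerivAt (fun v => v / (v ^ 2 + t ^ 2)) ((t ^ 2 - v ^ 2) / (v ^ 2 + t ^ 2) ^ 2) v
  have h1 : HasDerivAt (fun v : ℝ => v ^ 2 + t ^ 2) (2 * v) v := by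
    simpa using ((hasDerivAt_pow 2 v).add_const (t ^ 2))
  have := (hasDerivAt_id v).div h1 (pos_den ht v).ne'
  refine this.congr_deriv ?_
  field_simp
  simp only [id]
  ring

lemma hasDerivAt_φ'' (ht : 1 ≤ t ^ 2) (v : ℝ) : HasDerivAt (P2 t) (P3 t v) v := by
  show HasDerivAt (fun v => (t ^ 2 - v ^ 2) / (v ^ 2 + t ^ 2) ^ 2)
      (2 * v * (v ^ 2 - 3 * t ^ 2) / (v ^ 2 + t ^ 2) ^ 3) v
  have h1 : HasDerivAt (fun v : ℝ => t ^ 2 - v ^ 2) (-(2 * v)) v := by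
    simpa using ((hasDerivAt_pow 2 v).const_sub (t ^ 2))
  have h2 : HasDerivAt (fun v : ℝ => (v ^ 2 + t ^ 2) ^ 2) (2 * (v ^ 2 + t ^ 2) * (2 * v)) v := by
    have h0 : HasDerivAt (fun v : ℝ => v ^ 2 + t ^ 2) (2 * v) v := by
      simpa using ((hasDerivAt_pow 2 v).add_const (t ^ 2))
    simpa [mul_comm, mul_assoc, Function.comp_def] using ((hasDerivAt_pow 2 (v ^ 2 + t ^ 2)).comp v h0)
  have := h1.div h2 (by positivity)
  refine this.congr_deriv ?_
  have h3 : (0:ℝ) < v ^ 2 + t ^ 2 := pos_den ht v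
  field_simp
  ring

lemma hasDerivAt_q (ht : 1 ≤ t ^ 2) (v : ℝ) :
    HasDerivAt (fun v : ℝ => -3 / (v ^ 2 + t ^ 2)) (6 * v / (v ^ 2 + t ^ 2) ^ 2) v := by
  have h1 : HasDerivAt (fun v : ℝ => v ^ 2 + t ^ 2) (2 * v) v := by
    simpa using ((hasDerivAt_pow 2 v).add_const (t ^ 2))
  have := (hasDerivAt_const v (-3:ℝ)).div h1 (pos_den ht v).ne'
  refine this.congr_deriv ?_
  have h3 : (0:ℝ) < v ^ 2 + t ^ 2 := pos_den ht v
  field_simp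
  ring

lemma phi3_bound (ht : 1 ≤ t ^ 2) (v : ℝ) :
    |P3 t v| ≤ 6 * |v| / (v ^ 2 + t ^ 2) ^ 2 := by
  show |2 * v * (v ^ 2 - 3 * t ^ 2) / (v ^ 2 + t ^ 2) ^ 3| ≤ 6 * |v| / (v ^ 2 + t ^ 2) ^ 2
  have h3 : (0:ℝ) < v ^ 2 + t ^ 2 := pos_den ht v
  rw [abs_div, abs_of_pos (by positivity : (0:ℝ) < (v ^ 2 + t ^ 2) ^ 3)]
  have h4 : |2 * v * (v ^ 2 - 3 * t ^ 2)| ≤ 6 * |v| * (v ^ 2 + t ^ 2) := by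
    rw [abs_mul, abs_mul, abs_two]
    have : |v ^ 2 - 3 * t ^ 2| ≤ 3 * (v ^ 2 + t ^ 2) := by
      rw [abs_le]; constructor <;> nlinarith
    nlinarith [abs_nonneg v]
  calc |2 * v * (v ^ 2 - 3 * t ^ 2)| / (v ^ 2 + t ^ 2) ^ 3
      ≤ (6 * |v| * (v ^ 2 + t ^ 2)) / (v ^ 2 + t ^ 2) ^ 3 := by gcongr
    _ = 6 * |v| / (v ^ 2 + t ^ 2) ^ 2 := by field_simp

lemma six_v_bound (ht : 1 ≤ t ^ 2) (v : ℝ) :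
    6 * |v| / (v ^ 2 + t ^ 2) ^ 2 ≤ 3 / t ^ 2 := by
  have h3 : (0:ℝ) < v ^ 2 + t ^ 2 := pos_den ht v
  rw [div_le_div_iff₀ (by positivity) (by positivity)]
  have h1 : 2 * |v| * |t| ≤ v ^ 2 + t ^ 2 := by
    nlinarith [sq_abs v, sq_abs t, sq_nonneg (|v| - |t|)]
  have h2 : 1 ≤ |t| := by nlinarith [sq_abs t, abs_nonneg t]
  have h6 : |t| ≤ t ^ 2 := by nlinarith [sq_abs t]
  nlinarith [abs_nonneg v, abs_nonneg t, mul_le_mul_of_nonneg_left h6 (by positivity : (0:ℝ) ≤ 3 * (v^2+t^2)), mul_le_mul_of_nonneg_right h1 (by positivity : (0:ℝ) ≤ 3 * |t|)]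

lemma phi3_bound' (ht : 1 ≤ t ^ 2) (v : ℝ) :
    |P3 t v| ≤ 3 / t ^ 2 :=
  (phi3_bound ht v).trans (six_v_bound ht v)

lemma cont_aux (ht : 1 ≤ t ^ 2) {f : ℝ → ℝ} (hf : Continuous f) (k : ℕ) :
    Continuous fun v => f v / (v ^ 2 + t ^ 2) ^ k :=
  hf.div (by continuity) (fun v => by have := pos_den ht v; positivity)

lemma cont_P3 (ht : 1 ≤ t ^ 2) : Continuous (P3 t) :=
  cont_aux ht (by continuity) 3

lemma cont_P2 (ht : 1 ≤ t ^ 2) : Continuous (P2 t) :=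
  cont_aux ht (by continuity) 2

-- C1
lemma P2_diff_bound (ht : 1 ≤ t ^ 2) {σ u : ℝ} (hσ : 0 ≤ σ) (hu : 0 ≤ u) :
    |P2 t (u + σ) - P2 t u| ≤ 3 * (1 / (u ^ 2 + t ^ 2) - 1 / ((u + σ) ^ 2 + t ^ 2)) := by
  have hftc : P2 t (u + σ) - P2 t u = ∫ v in u..(u + σ), P3 t v :=
    (integral_eq_sub_of_hasDerivAt (fun v _ => hasDerivAt_φ'' ht v)
      ((cont_P3 ht).intervalIntegrable _ _)).symm
  have hbound : |∫ v in u..(u + σ), P3 t v| ≤ |∫ v in u..(u + σ), 6 * v / (v ^ 2 + t ^ 2) ^ 2| := by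
    rw [← Real.norm_eq_abs (∫ v in u..(u + σ), P3 t v)]
    apply intervalIntegral.norm_integral_le_abs_of_norm_le
    · filter_upwards [MeasureTheory.ae_restrict_mem measurableSet_uIoc] with v hv
      have hv0 : 0 ≤ v := by
        rcases Set.mem_uIoc.mp hv with h | h
        · linarith [h.1]
        · linarith [h.1, hσ]
      calc ‖P3 t v‖ ≤ 6 * |v| / (v ^ 2 + t ^ 2) ^ 2 := phi3_bound ht v
        _ = 6 * v / (v ^ 2 + t ^ 2) ^ 2 := by rw [abs_of_nonneg hv0]
    · exact (cont_aux ht (by continuity) 2).intervalIntegrable _ _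
  have hftc2 : (∫ v in u..(u + σ), 6 * v / (v ^ 2 + t ^ 2) ^ 2)
      = -3 / ((u + σ) ^ 2 + t ^ 2) - -3 / (u ^ 2 + t ^ 2) :=
    integral_eq_sub_of_hasDerivAt (fun v _ => hasDerivAt_q ht v)
      ((cont_aux ht (by continuity) 2).intervalIntegrable _ _)
  rw [hftc]
  refine hbound.trans ?_
  rw [hftc2]
  have h1 := pos_den ht u
  have h2 := pos_den ht (u + σ)
  have h3 : 1 / ((u + σ) ^ 2 + t ^ 2) ≤ 1 / (u ^ 2 + t ^ 2) := by
    apply one_div_le_one_div_of_le h1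
    nlinarith
  have e1 : -3 / ((u + σ) ^ 2 + t ^ 2) - -3 / (u ^ 2 + t ^ 2)
      = 3 * (1 / (u ^ 2 + t ^ 2) - 1 / ((u + σ) ^ 2 + t ^ 2)) := by ring
  rw [e1, abs_of_nonneg (by linarith)]

-- C2
lemma P2_diff_bound' (ht : 1 ≤ t ^ 2) {σ : ℝ} (hσ : 0 ≤ σ) (u : ℝ) :
    |P2 t (u + σ) - P2 t u| ≤ 3 / t ^ 2 * σ := by
  have hftc : P2 t (u + σ) - P2 t u = ∫ v in u..(u + σ), P3 t v :=
    (integral_eq_sub_of_hasDerivAt (fun v _ => hasDerivAt_φ'' ht v)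
      ((cont_P3 ht).intervalIntegrable _ _)).symm
  rw [hftc]
  have := intervalIntegral.norm_integral_le_of_norm_le_const
    (C := 3 / t ^ 2) (f := P3 t) (a := u) (b := u + σ) (fun v _ => phi3_bound' ht v)
  simpa [abs_of_nonneg hσ] using this

lemma cont_φ (ht : 1 ≤ t ^ 2) : Continuous (φ t) :=
  ((by continuity : Continuous fun v : ℝ => v ^ 2 + t ^ 2).log
    fun v => (pos_den ht v).ne').div_const 2

lemma cont_φ1 (ht : 1 ≤ t ^ 2) : Continuous (φ1 t) :=
  continuous_id.div (by continuity) fun v => (pos_den ht v).ne'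

lemma cont_hh (ht : 1 ≤ t ^ 2) (σ : ℝ) : Continuous (hh t σ) :=
  ((cont_φ ht).comp (continuous_id.add continuous_const : Continuous fun u : ℝ => u + σ)).sub (cont_φ ht)

lemma cont_hh1 (ht : 1 ≤ t ^ 2) (σ : ℝ) : Continuous (hh1 t σ) :=
  ((cont_φ1 ht).comp (continuous_id.add continuous_const : Continuous fun u : ℝ => u + σ)).sub (cont_φ1 ht)

lemma cont_hh2 (ht : 1 ≤ t ^ 2) (σ : ℝ) : Continuous (hh2 t σ) :=
  ((cont_P2 ht).comp (continuous_id.add continuous_const : Continuous fun u : ℝ => u + σ)).sub (cont_P2 ht)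

lemma hasDerivAt_hh (ht : 1 ≤ t ^ 2) (σ u : ℝ) : HasDerivAt (hh t σ) (hh1 t σ u) u := by
  have h1 : HasDerivAt (fun u : ℝ => φ t (u + σ)) (φ1 t (u + σ)) u := by
    simpa [Function.comp_def] using (hasDerivAt_φ ht (u + σ)).comp u ((hasDerivAt_id u).add_const σ)
  exact h1.sub (hasDerivAt_φ ht u)

lemma hasDerivAt_hh1 (ht : 1 ≤ t ^ 2) (σ u : ℝ) : HasDerivAt (hh1 t σ) (hh2 t σ u) u := by
  have h1 : HasDerivAt (fun u : ℝ => φ1 t (u + σ)) (P2 t (u + σ)) u := by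
    simpa [Function.comp_def] using (hasDerivAt_φ' ht (u + σ)).comp u ((hasDerivAt_id u).add_const σ)
  exact h1.sub (hasDerivAt_φ' ht u)

-- midpoint estimate
lemma midpoint_est (ht : 1 ≤ t ^ 2) (σ a : ℝ) :
    (∫ u in (a - 1/2)..(a + 1/2), hh t σ u)
      ≤ hh t σ a + (1/2) * ∫ u in (a - 1/2)..(a + 1/2), |hh2 t σ u| := by
  set M : ℝ := ∫ u in (a - 1/2)..(a + 1/2), |hh2 t σ u| with hM
  have hab : a - 1/2 ≤ a + 1/2 := by linarith
  have habs_int : ∀ c d : ℝ, IntervalIntegrable (fun u => |hh2 t σ u|) volume c d :=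
    fun c d => ((cont_hh2 ht σ).abs).intervalIntegrable c d
  have hM0 : 0 ≤ M := integral_nonneg hab (fun u _ => abs_nonneg _)
  -- bound on |hh1 u - hh1 a| for u in Icc
  have key : ∀ u ∈ Set.Icc (a - 1/2) (a + 1/2), |hh1 t σ u - hh1 t σ a| ≤ M := by
    intro u hu
    have hftc : hh1 t σ u - hh1 t σ a = ∫ v in a..u, hh2 t σ v :=
      (integral_eq_sub_of_hasDerivAt (fun v _ => hasDerivAt_hh1 ht σ v)
        ((cont_hh2 ht σ).intervalIntegrable _ _)).symm
    rw [hftc]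
    have h1 : |∫ v in a..u, hh2 t σ v| ≤ abs (∫ v in a..u, |hh2 t σ v|) := by
      simpa using intervalIntegral.norm_integral_le_abs_integral_norm
        (f := hh2 t σ) (a := a) (b := u) (μ := volume)
    refine h1.trans ?_
    rcases le_total a u with h | h
    · rw [abs_of_nonneg (integral_nonneg h (fun v _ => abs_nonneg _))]
      apply intervalIntegral.integral_mono_interval (by linarith) h hu.2 ?_ (habs_int _ _)
      filter_upwards [] with v using abs_nonneg _
    · rw [intervalIntegral.integral_symm, abs_neg,
        abs_of_nonneg (integral_nonneg h (fun v _ => abs_nonneg _))]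
      apply intervalIntegral.integral_mono_interval hu.1 h (by linarith) ?_ (habs_int _ _)
      filter_upwards [] with v using abs_nonneg _
  -- the deviation from the tangent line
  have hdev : ∀ u ∈ Set.Icc (a - 1/2) (a + 1/2),
      |hh t σ u - (hh t σ a + hh1 t σ a * (u - a))| ≤ M * (1/2) := by
    intro u hu
    have hconv : Convex ℝ (Set.Icc (a - 1/2) (a + 1/2)) := convex_Icc _ _
    have hd : ∀ x ∈ Set.Icc (a - 1/2) (a + 1/2),
        HasDerivWithinAt (fun u => hh t σ u - (hh t σ a + hh1 t σ a * (u - a)))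
          (hh1 t σ x - hh1 t σ a) (Set.Icc (a - 1/2) (a + 1/2)) x := by
      intro x hx
      have := ((hasDerivAt_hh ht σ x).sub
        (((hasDerivAt_id x).sub_const a).const_mul (hh1 t σ a) |>.const_add
          (hh t σ a))).hasDerivWithinAt (s := Set.Icc (a - 1/2) (a + 1/2))
      refine this.congr_deriv ?_; simp
    have := hconv.norm_image_sub_le_of_norm_hasDerivWithin_le hd
      (fun x hx => by simpa using key x hx)
      (Set.mem_Icc.mpr ⟨by linarith, by linarith⟩ : a ∈ _) hu
    simp only [Real.norm_eq_abs] at this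
    calc |hh t σ u - (hh t σ a + hh1 t σ a * (u - a))|
        = |(hh t σ u - (hh t σ a + hh1 t σ a * (u - a))) - 0| := by ring_nf
      _ ≤ M * |u - a| := by
          have e : (0:ℝ) = hh t σ a - (hh t σ a + hh1 t σ a * (a - a)) := by ring
          rw [e]
          exact this
      _ ≤ M * (1/2) := by
          have : |u - a| ≤ 1/2 := by
            rw [abs_le]; constructor <;> [linarith [hu.1]; linarith [hu.2]]
          exact mul_le_mul_of_nonneg_left this hM0
  -- integrate
  have clin : Continuous fun u : ℝ => u - a := by continuity
  have clin2 : Continuous fun u : ℝ => hh1 t σ a * (u - a) := by continuity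
  have ctang : Continuous fun u : ℝ => hh t σ a + hh1 t σ a * (u - a) := by continuity
  have hint_lin : (∫ u in (a - 1/2)..(a + 1/2), (hh t σ a + hh1 t σ a * (u - a))) = hh t σ a := by
    have h1 : (∫ u in (a - 1/2)..(a + 1/2), (u - a)) = 0 := by
      rw [intervalIntegral.integral_sub (intervalIntegrable_id) intervalIntegrable_const,
        integral_id, intervalIntegral.integral_const, smul_eq_mul]
      ring
    rw [intervalIntegral.integral_add (intervalIntegrable_const) (clin2.intervalIntegrable _ _),
      intervalIntegral.integral_const_mul, h1, intervalIntegral.integral_const, smul_eq_mul]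
    ring
  have hsplit : (∫ u in (a - 1/2)..(a + 1/2), hh t σ u)
      = (∫ u in (a - 1/2)..(a + 1/2), (hh t σ a + hh1 t σ a * (u - a)))
        + ∫ u in (a - 1/2)..(a + 1/2), (hh t σ u - (hh t σ a + hh1 t σ a * (u - a))) := by
    rw [← intervalIntegral.integral_add (ctang.intervalIntegrable _ _)
      (g := fun u => hh t σ u - (hh t σ a + hh1 t σ a * (u - a))) (((cont_hh ht σ).sub ctang).intervalIntegrable _ _)]
    congr 1
    ext u
    ring
  rw [hsplit, hint_lin]
  have : (∫ u in (a - 1/2)..(a + 1/2), (hh t σ u - (hh t σ a + hh1 t σ a * (u - a))))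
      ≤ ∫ u in (a - 1/2)..(a + 1/2), M * (1/2) := by
    apply intervalIntegral.integral_mono_on hab
      (((cont_hh ht σ).sub ctang).intervalIntegrable _ _)
      intervalIntegrable_const
    intro u hu
    exact (le_abs_self _).trans (hdev u hu)
  rw [intervalIntegral.integral_const] at this
  have e2 : ((a + 1/2) - (a - 1/2)) • (M * (1/2)) = (1/2) * M := by
    simp [smul_eq_mul]; ring
  rw [e2] at this
  linarith

lemma sum_int (ht : 1 ≤ t ^ 2) {f : ℝ → ℝ} (hf : Continuous f) (n : ℕ) :
    ∑ j ∈ range (n + 1), (∫ u in ((j:ℝ) - 1/2)..((j:ℝ) + 1/2), f u)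
      = ∫ u in (-(1/2) : ℝ)..((n:ℝ) + 1/2), f u := by
  have h := intervalIntegral.sum_integral_adjacent_intervals
    (a := fun k : ℕ => (k:ℝ) - 1/2) (μ := volume) (f := f) (n := n + 1)
    (fun k _ => hf.intervalIntegrable _ _)
  simp only [Nat.cast_zero, Nat.cast_add, Nat.cast_one] at h
  calc ∑ j ∈ range (n + 1), (∫ u in ((j:ℝ) - 1/2)..((j:ℝ) + 1/2), f u)
      = ∑ j ∈ range (n + 1), (∫ u in ((j:ℝ) - 1/2)..(((j:ℝ) + 1) - 1/2), f u) := by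
        apply Finset.sum_congr rfl
        intro j _
        congr 1
        ring
    _ = ∫ u in ((0:ℝ) - 1/2)..(((n:ℝ) + 1) - 1/2), f u := h
    _ = ∫ u in (-(1/2) : ℝ)..((n:ℝ) + 1/2), f u := by congr 1 <;> ring

-- G
lemma abs_hh2_int_bound (ht : 1 ≤ t ^ 2) {σ : ℝ} (hσ : 0 ≤ σ) {n : ℕ} (hn : σ ≤ n) :
    (∫ u in (-(1/2) : ℝ)..((n:ℝ) + 1/2), |hh2 t σ u|) ≤ 5 * σ / t ^ 2 := by
  have habs : Continuous fun u => |hh2 t σ u| := (cont_hh2 ht σ).abs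
  have hsplit : (∫ u in (-(1/2) : ℝ)..((n:ℝ) + 1/2), |hh2 t σ u|)
      = (∫ u in (-(1/2) : ℝ)..(0:ℝ), |hh2 t σ u|) + ∫ u in (0:ℝ)..((n:ℝ) + 1/2), |hh2 t σ u| :=
    (integral_add_adjacent_intervals (habs.intervalIntegrable _ _)
      (habs.intervalIntegrable _ _)).symm
  have ht2 : (0:ℝ) < t ^ 2 := by linarith
  have h1 : (∫ u in (-(1/2) : ℝ)..(0:ℝ), |hh2 t σ u|) ≤ 3 / 2 * σ / t ^ 2 := by
    have := intervalIntegral.integral_mono_on (by norm_num : (-(1/2) : ℝ) ≤ 0)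
      (habs.intervalIntegrable _ _)
      (intervalIntegrable_const : IntervalIntegrable _ volume _ _)
      (fun u _ => P2_diff_bound' ht hσ u)
    rw [intervalIntegral.integral_const, smul_eq_mul] at this
    calc (∫ u in (-(1/2) : ℝ)..(0:ℝ), |hh2 t σ u|) ≤ (0 - -(1/2)) * (3 / t ^ 2 * σ) := this
      _ = 3 / 2 * σ / t ^ 2 := by ring
  have h2 : (∫ u in (0:ℝ)..((n:ℝ) + 1/2), |hh2 t σ u|) ≤ 3 * σ / t ^ 2 := by
    have hq : Continuous fun u : ℝ => 1 / (u ^ 2 + t ^ 2) :=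
      continuous_const.div (by continuity) fun v => (pos_den ht v).ne'
    have hqs : Continuous fun u : ℝ => 3 * (1 / (u ^ 2 + t ^ 2) - 1 / ((u + σ) ^ 2 + t ^ 2)) := by
      apply continuous_const.mul (Continuous.sub hq ?_)
      exact hq.comp (continuous_id.add continuous_const)
    have hN : (0:ℝ) ≤ (n:ℝ) + 1/2 := by positivity
    have step1 : (∫ u in (0:ℝ)..((n:ℝ) + 1/2), |hh2 t σ u|)
        ≤ ∫ u in (0:ℝ)..((n:ℝ) + 1/2), 3 * (1 / (u ^ 2 + t ^ 2) - 1 / ((u + σ) ^ 2 + t ^ 2)) :=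
      intervalIntegral.integral_mono_on hN (habs.intervalIntegrable _ _)
        (hqs.intervalIntegrable _ _) (fun u hu => P2_diff_bound ht hσ hu.1)
    refine step1.trans ?_
    rw [intervalIntegral.integral_const_mul]
    have hsub : (∫ u in (0:ℝ)..((n:ℝ) + 1/2), (1 / (u ^ 2 + t ^ 2) - 1 / ((u + σ) ^ 2 + t ^ 2)))
        = (∫ u in (0:ℝ)..((n:ℝ) + 1/2), 1 / (u ^ 2 + t ^ 2))
          - ∫ u in (0:ℝ)..((n:ℝ) + 1/2), 1 / ((u + σ) ^ 2 + t ^ 2) :=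
      intervalIntegral.integral_sub (hq.intervalIntegrable _ _)
        ((hq.comp (continuous_id.add continuous_const)).intervalIntegrable _ _)
    have hshift : (∫ u in (0:ℝ)..((n:ℝ) + 1/2), 1 / ((u + σ) ^ 2 + t ^ 2))
        = ∫ u in (0 + σ)..(((n:ℝ) + 1/2) + σ), 1 / (u ^ 2 + t ^ 2) :=
      intervalIntegral.integral_comp_add_right (fun u => 1 / (u ^ 2 + t ^ 2)) σ
    have hsplit1 : (∫ u in (0:ℝ)..((n:ℝ) + 1/2), 1 / (u ^ 2 + t ^ 2))
        = (∫ u in (0:ℝ)..σ, 1 / (u ^ 2 + t ^ 2)) + ∫ u in σ..((n:ℝ) + 1/2), 1 / (u ^ 2 + t ^ 2) :=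
      (integral_add_adjacent_intervals (hq.intervalIntegrable _ _)
        (hq.intervalIntegrable _ _)).symm
    have hsplit2 : (∫ u in (0 + σ)..(((n:ℝ) + 1/2) + σ), 1 / (u ^ 2 + t ^ 2))
        = (∫ u in σ..((n:ℝ) + 1/2), 1 / (u ^ 2 + t ^ 2))
          + ∫ u in ((n:ℝ) + 1/2)..(((n:ℝ) + 1/2) + σ), 1 / (u ^ 2 + t ^ 2) := by
      rw [zero_add]
      exact (integral_add_adjacent_intervals (hq.intervalIntegrable _ _)
        (hq.intervalIntegrable _ _)).symm
    have htail : (0:ℝ) ≤ ∫ u in ((n:ℝ) + 1/2)..(((n:ℝ) + 1/2) + σ), 1 / (u ^ 2 + t ^ 2) :=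
      integral_nonneg (by linarith) (fun u _ => by positivity)
    have hhead : (∫ u in (0:ℝ)..σ, 1 / (u ^ 2 + t ^ 2)) ≤ σ / t ^ 2 := by
      have := intervalIntegral.integral_mono_on hσ (hq.intervalIntegrable _ _)
        (intervalIntegrable_const : IntervalIntegrable _ volume _ _)
        (fun u _ => by
          apply one_div_le_one_div_of_le ht2
          nlinarith [sq_nonneg u])
      rw [intervalIntegral.integral_const, smul_eq_mul, sub_zero] at this
      calc (∫ u in (0:ℝ)..σ, 1 / (u ^ 2 + t ^ 2)) ≤ σ * (1 / t ^ 2) := this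
        _ = σ / t ^ 2 := by ring
    rw [hsub, hshift, hsplit1, hsplit2]
    have : (∫ u in (0:ℝ)..σ, 1 / (u ^ 2 + t ^ 2))
        + (∫ u in σ..((n:ℝ) + 1/2), 1 / (u ^ 2 + t ^ 2))
        - ((∫ u in σ..((n:ℝ) + 1/2), 1 / (u ^ 2 + t ^ 2))
          + ∫ u in ((n:ℝ) + 1/2)..(((n:ℝ) + 1/2) + σ), 1 / (u ^ 2 + t ^ 2))
        ≤ σ / t ^ 2 := by linarith
    calc 3 * ((∫ u in (0:ℝ)..σ, 1 / (u ^ 2 + t ^ 2))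
        + (∫ u in σ..((n:ℝ) + 1/2), 1 / (u ^ 2 + t ^ 2))
        - ((∫ u in σ..((n:ℝ) + 1/2), 1 / (u ^ 2 + t ^ 2))
          + ∫ u in ((n:ℝ) + 1/2)..(((n:ℝ) + 1/2) + σ), 1 / (u ^ 2 + t ^ 2)))
        ≤ 3 * (σ / t ^ 2) := by linarith
      _ = 3 * σ / t ^ 2 := by ring
  rw [hsplit]
  have hpos : (0:ℝ) ≤ σ / t ^ 2 := by positivity
  have e1 : 3 / 2 * σ / t ^ 2 = 3 / 2 * (σ / t ^ 2) := by ring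
  have e2 : 3 * σ / t ^ 2 = 3 * (σ / t ^ 2) := by ring
  have e3 : 5 * σ / t ^ 2 = 5 * (σ / t ^ 2) := by ring
  rw [e1] at h1; rw [e2] at h2; rw [e3]
  linarith




-- H: decomposition of ∫ hh
lemma int_hh_eq (ht : 1 ≤ t ^ 2) {σ : ℝ} (hσ : 0 ≤ σ) {n : ℕ} (hn : σ ≤ n) :
    (∫ u in (-(1/2) : ℝ)..((n:ℝ) + 1/2), hh t σ u)
      = (∫ v in ((n:ℝ) + 1/2)..(((n:ℝ) + 1/2) + σ), φ t v)
        - ∫ v in (-(1/2) : ℝ)..(σ - 1/2), φ t v := by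
  have hφi : ∀ c d : ℝ, IntervalIntegrable (φ t) volume c d :=
    fun c d => (cont_φ ht).intervalIntegrable c d
  have hc : Continuous fun u : ℝ => φ t (u + σ) :=
    (cont_φ ht).comp (continuous_id.add continuous_const)
  have h1 : (∫ u in (-(1/2) : ℝ)..((n:ℝ) + 1/2), hh t σ u)
      = (∫ u in (-(1/2) : ℝ)..((n:ℝ) + 1/2), φ t (u + σ))
        - ∫ u in (-(1/2) : ℝ)..((n:ℝ) + 1/2), φ t u :=
    intervalIntegral.integral_sub (hc.intervalIntegrable _ _) (hφi _ _)
  have h2 : (∫ u in (-(1/2) : ℝ)..((n:ℝ) + 1/2), φ t (u + σ))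
      = ∫ v in (-(1/2) + σ)..(((n:ℝ) + 1/2) + σ), φ t v :=
    intervalIntegral.integral_comp_add_right (φ t) σ
  have h3 : (∫ v in (-(1/2) + σ)..(((n:ℝ) + 1/2) + σ), φ t v)
      = (∫ v in (-(1/2) + σ)..((n:ℝ) + 1/2), φ t v)
        + ∫ v in ((n:ℝ) + 1/2)..(((n:ℝ) + 1/2) + σ), φ t v :=
    (integral_add_adjacent_intervals (hφi _ _) (hφi _ _)).symm
  have h4 : (∫ v in (-(1/2) : ℝ)..((n:ℝ) + 1/2), φ t v)
      = (∫ v in (-(1/2) : ℝ)..(-(1/2) + σ), φ t v)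
        + ∫ v in (-(1/2) + σ)..((n:ℝ) + 1/2), φ t v :=
    (integral_add_adjacent_intervals (hφi _ _) (hφi _ _)).symm
  have h5 : (-(1/2) : ℝ) + σ = σ - 1/2 := by ring
  rw [h1, h2, h3, h4, h5]
  ring

-- H1
lemma int_right_ge (ht : 1 ≤ t ^ 2) {σ : ℝ} (hσ : 0 ≤ σ) {n : ℕ} (hn : 1 ≤ n) :
    σ * Real.log n ≤ ∫ v in ((n:ℝ) + 1/2)..(((n:ℝ) + 1/2) + σ), φ t v := by
  have hn1 : (1:ℝ) ≤ (n:ℝ) := by exact_mod_cast hn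
  have hlow : ∀ v ∈ Set.Icc ((n:ℝ) + 1/2) (((n:ℝ) + 1/2) + σ), Real.log n ≤ φ t v := by
    intro v hv
    have hv1 : (n:ℝ) ≤ v := by linarith [hv.1]
    have hn0 : (0:ℝ) < (n:ℝ) := by linarith
    have : Real.log ((n:ℝ) ^ 2) ≤ Real.log (v ^ 2 + t ^ 2) := by
      apply Real.log_le_log (by positivity)
      nlinarith
    rw [Real.log_pow] at this
    unfold φ
    push_cast at this ⊢
    linarith
  have := intervalIntegral.integral_mono_on (by linarith : (n:ℝ) + 1/2 ≤ ((n:ℝ) + 1/2) + σ)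
    (intervalIntegrable_const : IntervalIntegrable _ volume _ _)
    ((cont_φ ht).intervalIntegrable _ _) hlow
  rw [intervalIntegral.integral_const, smul_eq_mul] at this
  calc σ * Real.log (n:ℝ) = ((((n:ℝ) + 1/2) + σ) - ((n:ℝ) + 1/2)) * Real.log (n:ℝ) := by ring
    _ ≤ _ := this

-- H2
lemma int_left_le (ht : 1 ≤ t ^ 2) {σ : ℝ} (hσ : 0 ≤ σ) :
    (∫ v in (-(1/2) : ℝ)..(σ - 1/2), φ t v)
      ≤ σ * Real.log |t| + 3 / 2 * (σ + σ ^ 3) / t ^ 2 := by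
  have ht2 : (0:ℝ) < t ^ 2 := by linarith
  have hub : ∀ v ∈ Set.Icc (-(1/2) : ℝ) (σ - 1/2),
      φ t v ≤ Real.log |t| + (σ + 1/2) ^ 2 / (2 * t ^ 2) := by
    intro v hv
    have hv2 : v ^ 2 ≤ (σ + 1/2) ^ 2 := by
      apply sq_le_sq'
      · linarith [hv.1]
      · linarith [hv.2]
    have hlog : Real.log (v ^ 2 + t ^ 2) ≤ Real.log (t ^ 2) + v ^ 2 / t ^ 2 := by
      have h1 : Real.log (v ^ 2 + t ^ 2) - Real.log (t ^ 2)
          = Real.log ((v ^ 2 + t ^ 2) / t ^ 2) := by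
        rw [Real.log_div (by positivity) (by positivity)]
      have h2 : Real.log ((v ^ 2 + t ^ 2) / t ^ 2) ≤ (v ^ 2 + t ^ 2) / t ^ 2 - 1 :=
        Real.log_le_sub_one_of_pos (by positivity)
      have h3 : (v ^ 2 + t ^ 2) / t ^ 2 - 1 = v ^ 2 / t ^ 2 := by rw [add_div, div_self ht2.ne']; ring
      linarith
    have hlt : Real.log (t ^ 2) = 2 * Real.log |t| := by
      rw [Real.log_pow, Real.log_abs]
      push_cast
      ring
    unfold φ
    have hmono : v ^ 2 / t ^ 2 ≤ (σ + 1/2) ^ 2 / t ^ 2 := by gcongr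
    have e : (σ + 1/2) ^ 2 / (2 * t ^ 2) = ((σ + 1/2) ^ 2 / t ^ 2) / 2 := by ring
    linarith
  have hmono := intervalIntegral.integral_mono_on (by linarith : (-(1/2) : ℝ) ≤ σ - 1/2)
    ((cont_φ ht).intervalIntegrable _ _)
    (intervalIntegrable_const : IntervalIntegrable _ volume _ _) hub
  rw [intervalIntegral.integral_const, smul_eq_mul] at hmono
  have hnum : σ * (σ + 1/2) ^ 2 / 2 ≤ 3/2 * (σ + σ ^ 3) := by nlinarith [sq_nonneg (σ - 1)]
  calc (∫ v in (-(1/2) : ℝ)..(σ - 1/2), φ t v)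
      ≤ ((σ - 1/2) - (-(1/2))) * (Real.log |t| + (σ + 1/2) ^ 2 / (2 * t ^ 2)) := hmono
    _ = σ * Real.log |t| + (σ * (σ + 1/2) ^ 2 / 2) / t ^ 2 := by ring
    _ ≤ σ * Real.log |t| + (3/2 * (σ + σ ^ 3)) / t ^ 2 := by gcongr
    _ = σ * Real.log |t| + 3/2 * (σ + σ ^ 3) / t ^ 2 := by ring




lemma key_ineq (ht : 1 ≤ t ^ 2) {σ : ℝ} (hσ : 0 ≤ σ) {n : ℕ} (hn : 1 ≤ n) (hσn : σ ≤ n) :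
    σ * Real.log n + ∑ j ∈ range (n + 1), φ t j
      ≤ σ * Real.log |t| + 8 * (σ + σ ^ 3) / t ^ 2
        + ∑ j ∈ range (n + 1), φ t ((j:ℝ) + σ) := by
  have ht2 : (0:ℝ) < t ^ 2 := by linarith
  have hF : (∫ u in (-(1/2) : ℝ)..((n:ℝ) + 1/2), hh t σ u)
      = ∑ j ∈ range (n + 1), (∫ u in ((j:ℝ) - 1/2)..((j:ℝ) + 1/2), hh t σ u) :=
    (sum_int ht (cont_hh ht σ) n).symm
  have hs1 : ∑ j ∈ range (n + 1), (∫ u in ((j:ℝ) - 1/2)..((j:ℝ) + 1/2), hh t σ u)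
      ≤ ∑ j ∈ range (n + 1),
        (hh t σ j + (1/2) * ∫ u in ((j:ℝ) - 1/2)..((j:ℝ) + 1/2), |hh2 t σ u|) :=
    Finset.sum_le_sum (fun j _ => midpoint_est ht σ j)
  have hs2 : ∑ j ∈ range (n + 1),
        (hh t σ j + (1/2) * ∫ u in ((j:ℝ) - 1/2)..((j:ℝ) + 1/2), |hh2 t σ u|)
      = (∑ j ∈ range (n + 1), hh t σ j)
        + (1/2) * ∫ u in (-(1/2) : ℝ)..((n:ℝ) + 1/2), |hh2 t σ u| := by
    rw [Finset.sum_add_distrib, ← Finset.mul_sum, sum_int ht ((cont_hh2 ht σ).abs) n]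
  have hG := abs_hh2_int_bound ht hσ hσn
  have hH := int_hh_eq ht hσ hσn
  have hH1 := int_right_ge (σ := σ) ht hσ hn
  have hH2 := int_left_le (σ := σ) ht hσ
  have hsum_sub : ∑ j ∈ range (n + 1), hh t σ j
      = (∑ j ∈ range (n + 1), φ t ((j:ℝ) + σ)) - ∑ j ∈ range (n + 1), φ t j := by
    rw [← Finset.sum_sub_distrib]
    rfl
  have hchain : σ * Real.log n - σ * Real.log |t| - 3/2 * (σ + σ ^ 3) / t ^ 2
      ≤ (∑ j ∈ range (n + 1), hh t σ j) + (1/2) * (5 * σ / t ^ 2) := by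
    have hle : (∫ u in (-(1/2) : ℝ)..((n:ℝ) + 1/2), hh t σ u)
        ≤ (∑ j ∈ range (n + 1), hh t σ j)
          + (1/2) * ∫ u in (-(1/2) : ℝ)..((n:ℝ) + 1/2), |hh2 t σ u| := by
      rw [hF]; exact hs1.trans (le_of_eq hs2)
    have hge : σ * Real.log n - (σ * Real.log |t| + 3/2 * (σ + σ ^ 3) / t ^ 2)
        ≤ (∫ u in (-(1/2) : ℝ)..((n:ℝ) + 1/2), hh t σ u) := by
      rw [hH]; linarith
    linarith
  have hfin : (1/2) * (5 * σ / t ^ 2) + 3/2 * (σ + σ ^ 3) / t ^ 2 ≤ 8 * (σ + σ ^ 3) / t ^ 2 := by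
    have e1 : (1:ℝ)/2 * (5 * σ / t ^ 2) = (5/2 * σ) / t ^ 2 := by ring
    have e2 : (3:ℝ)/2 * (σ + σ ^ 3) / t ^ 2 = (3/2 * (σ + σ ^ 3)) / t ^ 2 := by ring
    have e3 : (8:ℝ) * (σ + σ ^ 3) / t ^ 2 = (8 * (σ + σ ^ 3)) / t ^ 2 := by ring
    rw [e1, e2, e3, ← add_div, div_le_div_iff₀ ht2 ht2]
    nlinarith [pow_nonneg hσ 3]
  rw [hsum_sub] at hchain
  linarith

lemma exp_φ (ht : 1 ≤ t ^ 2) (v : ℝ) : Real.exp (φ t v) = Real.sqrt (v ^ 2 + t ^ 2) := by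
  rw [Real.sqrt_eq_rpow, Real.rpow_def_of_pos (pos_den ht v)]
  unfold φ
  ring_nf

lemma abs_term1 (ht : 1 ≤ t ^ 2) (σ : ℝ) (j : ℕ) :
    ‖(σ:ℂ) + (t:ℂ) * Complex.I + (j:ℕ)‖ = Real.exp (φ t ((j:ℝ) + σ)) := by
  rw [exp_φ ht, Complex.norm_def, Complex.normSq_apply]
  norm_num
  congr 1
  ring

lemma abs_term2 (ht : 1 ≤ t ^ 2) (j : ℕ) :
    ‖(t:ℂ) * Complex.I + (j:ℕ)‖ = Real.exp (φ t (j:ℝ)) := by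
  rw [exp_φ ht, Complex.norm_def, Complex.normSq_apply]
  norm_num
  congr 1
  ring

lemma abs_gammaSeq1 (ht : 1 ≤ t ^ 2) (σ : ℝ) {n : ℕ} (hn : 1 ≤ n) :
    ‖Complex.GammaSeq ((σ:ℂ) + (t:ℂ) * Complex.I) n‖
      = Real.exp (σ * Real.log n) * ((Nat.factorial n : ℕ) : ℝ)
        / Real.exp (∑ j ∈ range (n + 1), φ t ((j:ℝ) + σ)) := by
  have hn0 : (0:ℝ) < (n:ℝ) := by exact_mod_cast hn
  rw [Complex.GammaSeq, norm_div, norm_mul, Complex.norm_natCast]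
  congr 1
  · congr 1
    have : ((n:ℂ) : ℂ) = (((n:ℝ)):ℂ) := by push_cast; ring
    rw [this, Complex.norm_cpow_eq_rpow_re_of_pos hn0, Real.rpow_def_of_pos hn0]
    norm_num
    rw [mul_comm]
  · rw [norm_prod, Real.exp_sum]
    exact Finset.prod_congr rfl fun j _ => abs_term1 ht σ j

lemma abs_gammaSeq2 (ht : 1 ≤ t ^ 2) {n : ℕ} (hn : 1 ≤ n) :
    ‖Complex.GammaSeq ((t:ℂ) * Complex.I) n‖
      = ((Nat.factorial n : ℕ) : ℝ) / Real.exp (∑ j ∈ range (n + 1), φ t (j:ℝ)) := by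
  have hn0 : (0:ℝ) < (n:ℝ) := by exact_mod_cast hn
  rw [Complex.GammaSeq, norm_div, norm_mul, Complex.norm_natCast]
  congr 1
  · have : ((n:ℂ) : ℂ) = (((n:ℝ)):ℂ) := by push_cast; ring
    rw [this, Complex.norm_cpow_eq_rpow_re_of_pos hn0]
    norm_num
  · rw [norm_prod, Real.exp_sum]
    exact Finset.prod_congr rfl fun j _ => abs_term2 ht j

lemma per_n (ht : 1 ≤ t ^ 2) {σ : ℝ} (hσ : 0 ≤ σ) {n : ℕ} (hn : 1 ≤ n) (hσn : σ ≤ n) :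
    ‖Complex.GammaSeq ((σ:ℂ) + (t:ℂ) * Complex.I) n‖
      ≤ Real.exp (σ * Real.log |t| + 8 * (σ + σ ^ 3) / t ^ 2)
        * ‖Complex.GammaSeq ((t:ℂ) * Complex.I) n‖ := by
  rw [abs_gammaSeq1 ht σ hn, abs_gammaSeq2 ht hn, ← mul_div_assoc]
  have hfac : (0:ℝ) < ((Nat.factorial n : ℕ) : ℝ) := by positivity
  rw [div_le_div_iff₀ (Real.exp_pos _) (Real.exp_pos _)]
  have h := key_ineq ht hσ hn hσn
  calc Real.exp (σ * Real.log n) * ((Nat.factorial n : ℕ) : ℝ) * Real.exp (∑ j ∈ range (n + 1), φ t (j:ℝ))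
      = ((Nat.factorial n : ℕ) : ℝ) * Real.exp (σ * Real.log n + ∑ j ∈ range (n + 1), φ t (j:ℝ)) := by
        rw [Real.exp_add]; ring
    _ ≤ ((Nat.factorial n : ℕ) : ℝ) * Real.exp ((σ * Real.log |t| + 8 * (σ + σ ^ 3) / t ^ 2)
          + ∑ j ∈ range (n + 1), φ t ((j:ℝ) + σ)) := by
        apply mul_le_mul_of_nonneg_left _ hfac.le
        exact Real.exp_le_exp.mpr (by linarith)
    _ = Real.exp (σ * Real.log |t| + 8 * (σ + σ ^ 3) / t ^ 2) * ((Nat.factorial n : ℕ) : ℝ)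
          * Real.exp (∑ j ∈ range (n + 1), φ t ((j:ℝ) + σ)) := by
        rw [Real.exp_add]; ring

lemma gamma_bound (ht : 1 ≤ t ^ 2) {σ : ℝ} (hσ : 0 ≤ σ) :
    ‖Complex.Gamma ((σ:ℂ) + (t:ℂ) * Complex.I)‖
      ≤ Real.exp (σ * Real.log |t| + 8 * (σ + σ ^ 3) / t ^ 2)
        * ‖Complex.Gamma ((t:ℂ) * Complex.I)‖ := by
  have t1 : Tendsto (fun n => ‖Complex.GammaSeq ((σ:ℂ) + (t:ℂ) * Complex.I) n‖)
      atTop (nhds (‖Complex.Gamma ((σ:ℂ) + (t:ℂ) * Complex.I)‖)) :=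
    (continuous_norm.tendsto _).comp (Complex.GammaSeq_tendsto_Gamma _)
  have t2 : Tendsto (fun n => Real.exp (σ * Real.log |t| + 8 * (σ + σ ^ 3) / t ^ 2)
        * ‖Complex.GammaSeq ((t:ℂ) * Complex.I) n‖) atTop
      (nhds (Real.exp (σ * Real.log |t| + 8 * (σ + σ ^ 3) / t ^ 2)
        * ‖Complex.Gamma ((t:ℂ) * Complex.I)‖)) :=
    tendsto_const_nhds.mul
      ((continuous_norm.tendsto _).comp (Complex.GammaSeq_tendsto_Gamma _))
  refine le_of_tendsto_of_tendsto t1 t2 ?_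
  filter_upwards [eventually_ge_atTop (max 1 ⌈σ⌉₊)] with n hn
  have h1 : 1 ≤ n := le_trans (le_max_left _ _) hn
  have h2 : σ ≤ n := by
    calc σ ≤ (⌈σ⌉₊ : ℝ) := Nat.le_ceil σ
      _ ≤ n := by exact_mod_cast le_trans (le_max_right _ _) hn
  exact per_n ht hσ h1 h2

end St14X

theorem stmt_14 :
    ∃ D > (0 : ℝ), ∀ σ t : ℝ, 0 ≤ σ → 1 ≤ |t| →
      (Complex.log (Complex.Gamma ((σ : ℂ) + (t : ℂ) * Complex.I)) -
        Complex.log (Complex.Gamma ((t : ℂ) * Complex.I))).re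
        ≤ σ * Real.log |t| + D * (σ + σ ^ 3) / t ^ 2 := by
  refine ⟨8, by norm_num, fun σ t hσ htabs => ?_⟩
  have ht : 1 ≤ t ^ 2 := by nlinarith [sq_abs t, abs_nonneg t]
  have htne : t ≠ 0 := by intro h; rw [h] at htabs; simp at htabs; linarith
  have hne1 : Complex.Gamma ((σ:ℂ) + (t:ℂ) * Complex.I) ≠ 0 := by
    apply Complex.Gamma_ne_zero
    intro m h
    have := congrArg Complex.im h
    simp at this
    exact htne this
  have hne2 : Complex.Gamma ((t:ℂ) * Complex.I) ≠ 0 := by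
    apply Complex.Gamma_ne_zero
    intro m h
    have := congrArg Complex.im h
    simp at this
    exact htne this
  have hpos1 : 0 < ‖Complex.Gamma ((σ:ℂ) + (t:ℂ) * Complex.I)‖ := by
    simpa [norm_pos_iff] using hne1
  have hpos2 : 0 < ‖Complex.Gamma ((t:ℂ) * Complex.I)‖ := by
    simpa [norm_pos_iff] using hne2
  have hb := St14X.gamma_bound ht hσ
  rw [Complex.sub_re, Complex.log_re, Complex.log_re]
  have hlog := Real.log_le_log hpos1 hb
  rw [Real.log_mul (Real.exp_ne_zero _) hpos2.ne', Real.log_exp] at hlog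
  linarith
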